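/- Let V be a finite type of variables with a constraint system (P, N, S). Then there exists an assignment M : V → ZFSet modeling the whole system (P, N, S) if and only if there exist assignments M, T : V → ZFSet such that M models the literals P and N and the pair (M, T) satisfies the Ξ-conditions for (P, N, S). (This is the satisfiability-preservation content of the O(n²)-expressibility of singleton-atom conjunctions from BST into BST⁺.) -/

import Mathlib

/-- `M` models the positive literals `a = b \ c` in `P` and the negative literals
`a ≠ b \ c` in `N`. -/
def ModelsLits {V : Type*} (P N : Finset (V × V × V)) (M : V → ZFSet) : Prop :=
  (∀ t ∈ P, M t.1 = M t.2.1 \ M t.2.2) ∧ (∀ t ∈ N, M t.1 ≠ M t.2.1 \ M t.2.2)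

/-- `M` models the whole constraint system `(P, N, S)`. -/
def ModelsSystem {V : Type*} (P N : Finset (V × V × V)) (S : Finset (V × V))
    (M : V → ZFSet) : Prop :=
  ModelsLits P N M ∧ ∀ p ∈ S, M p.1 = {M p.2}

/-- The pair of assignments `(M, T)` satisfies the Ξ-conditions for the
constraint system `(P, N, S)`. -/
def XiConditions {V : Type*} (S : Finset (V × V)) (M T : V → ZFSet) : Prop :=
  (∀ p ∈ S, ¬ M p.1 ⊆ M p.2) ∧
  (∀ p ∈ S, ∀ q ∈ S, (M p.2 = M q.2 ↔ M p.1 = M q.1)) ∧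
  (∀ p ∈ S, ∀ v : V, M p.1 ∩ M v ≠ ∅ → M p.1 ⊆ M v) ∧
  (∀ p ∈ S, ∀ v : V, M p.1 ∩ M v ≠ ∅ → T p.2 ⊆ T v ∧ T p.2 ≠ T v) ∧
  (∀ u v : V, M u = M v → T u = T v)

open Classical in
/-- The modified assignment `M_{x,y}`. -/
noncomputable def modifyAssign {V : Type*} (M : V → ZFSet) (x y : V) : V → ZFSet :=
  fun v => if M x ∩ M v = ∅ then M v else (M v \ M x) ∪ {M y}

namespace SingletonExpr

open ZFSet

attribute [local instance] Classical.propDecidable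

universe a b c

/-- A ZFC set from a list of ZFC sets. -/
noncomputable def ofl : List ZFSet.{b} → ZFSet.{b}
  | [] => ∅
  | x :: l => insert x (ofl l)

theorem mem_ofl {y : ZFSet.{b}} : ∀ {l : List ZFSet.{b}}, y ∈ ofl l ↔ y ∈ l
  | [] => by simp [ofl]
  | x :: l => by
    simp only [ofl, ZFSet.mem_insert_iff, List.mem_cons, mem_ofl]

/-- von Neumann numerals -/
noncomputable def nz : ℕ → ZFSet.{b}
  | 0 => ∅
  | n + 1 => insert (nz n) (nz n)

theorem nz_mem {i j : ℕ} (h : i < j) : nz.{b} i ∈ nz.{b} j := by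
  induction j with
  | zero => omega
  | succ n ih =>
    rcases Nat.lt_succ_iff_lt_or_eq.1 h with h | h
    · exact ZFSet.mem_insert_of_mem _ (ih h)
    · subst h; exact ZFSet.mem_insert _ _

theorem nz_inj : Function.Injective nz.{b} := by
  intro i j h
  by_contra hne
  rcases Nat.lt_or_ge i j with hl | hg
  · have := nz_mem hl; rw [h] at this; exact ZFSet.mem_irrefl _ this
  · have hl : j < i := by omega
    have := nz_mem hl; rw [h] at this; exact ZFSet.mem_irrefl _ this

theorem nz_subset {i j : ℕ} (h : i ≤ j) : nz.{b} i ⊆ nz.{b} j := by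
  induction j with
  | zero =>
    have : i = 0 := by omega
    subst this; exact ZFSet.subset_def.2 fun z hz => hz
  | succ n ih =>
    rcases Nat.le_succ_iff.1 h with h | h
    · exact ZFSet.subset_def.2 fun z hz =>
        ZFSet.mem_insert_of_mem _ (ZFSet.subset_def.1 (ih h) hz)
    · subst h; exact ZFSet.subset_def.2 fun z hz => hz

theorem sing_ne_nz {s j : ℕ} (hs : s ≠ 0) : ({nz.{b} s} : ZFSet.{b}) ≠ nz.{b} j := by
  intro h
  cases j with
  | zero =>
    have : nz.{b} s ∈ ({nz.{b} s} : ZFSet.{b}) := ZFSet.mem_singleton.2 rfl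
    rw [h] at this; exact ZFSet.notMem_empty _ this
  | succ n =>
    have h0 : nz.{b} 0 ∈ nz.{b} (n + 1) := nz_mem (Nat.succ_pos n)
    rw [← h] at h0
    exact hs (nz_inj (ZFSet.mem_singleton.1 h0)).symm

theorem zf_subset_antisymm {x y : ZFSet.{a}} (h1 : x ⊆ y) (h2 : y ⊆ x) : x = y :=
  ZFSet.ext fun z => ⟨fun hz => ZFSet.subset_def.1 h1 hz, fun hz => ZFSet.subset_def.1 h2 hz⟩

section Main

variable {V : Type*} [Fintype V]

/-- threshold -/
noncomputable def KV (V : Type*) [Fintype V] : ℕ := Fintype.card V + 1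

noncomputable def idxF : Finset V → ℕ := fun δ => (Fintype.equivFin (Finset V)) δ

theorem idxF_inj : Function.Injective (idxF (V := V)) := by
  intro x y h
  exact (Fintype.equivFin (Finset V)).injective (Fin.val_injective h)

/-- fresh element attached to a region -/
noncomputable def cR (δ : Finset V) : ZFSet.{b} := {nz (KV V + idxF δ)}

theorem cR_pos (δ : Finset V) : KV V + idxF δ ≠ 0 := by
  simp only [KV]; omega

/-- rank index used to build the auxiliary assignment `T` -/
noncomputable def rkc (M : V → ZFSet.{a}) (v : V) : ℕ :=
  (Finset.univ.filter (fun u => ZFSet.rank (M u) < ZFSet.rank (M v))).card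

theorem rkc_lt {M : V → ZFSet.{a}} {u v : V} (h : ZFSet.rank (M u) < ZFSet.rank (M v)) :
    rkc M u < rkc M v := by
  apply Finset.card_lt_card
  constructor
  · intro w hw
    simp only [Finset.mem_filter, Finset.mem_univ, true_and] at hw ⊢
    exact hw.trans h
  · intro hsub
    have hu : u ∈ Finset.univ.filter (fun w => ZFSet.rank (M w) < ZFSet.rank (M v)) := by
      simp only [Finset.mem_filter, Finset.mem_univ, true_and]; exact h
    have h2 := hsub hu
    simp only [Finset.mem_filter, Finset.mem_univ, true_and] at h2
    exact lt_irrefl _ h2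

variable (S : Finset (V × V)) (M : V → ZFSet.{a}) (T : V → ZFSet.{c})

/-- the region (trace) of a set `x` -/
noncomputable def Rgn (x : ZFSet.{a}) : Finset V := Finset.univ.filter (fun v => x ∈ M v)

theorem mem_Rgn {x : ZFSet.{a}} {v : V} : v ∈ Rgn M x ↔ x ∈ M v := by
  simp [Rgn]

/-- realized regions -/
noncomputable def Rel : Finset (Finset V) :=
  Finset.univ.filter (fun δ => ∃ x : ZFSet.{a}, Rgn M x = δ)

theorem Rgn_mem_Rel (x : ZFSet.{a}) : Rgn M x ∈ Rel M := by
  simp only [Rel, Finset.mem_filter, Finset.mem_univ, true_and]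
  exact ⟨x, rfl⟩

/-- realized regions containing `v` -/
noncomputable def Dv (v : V) : Finset (Finset V) := (Rel M).filter (fun δ => v ∈ δ)

theorem mem_Dv {δ : Finset V} {v : V} : δ ∈ Dv M v ↔ δ ∈ Rel M ∧ v ∈ δ := by
  simp [Dv]

noncomputable def mT (v : V) : ℕ :=
  (Finset.univ.filter (fun u => T u ⊆ T v ∧ T u ≠ T v)).card

/-- the recursive (fueled) reconstruction -/
noncomputable def g : ℕ → V → ZFSet.{b}
  | 0, _ => ∅
  | k + 1, v =>
      ofl ((Dv M v).toList.map
        (fun δ => if hs : ∃ p, p ∈ S ∧ p.1 ∈ δ then g k (Classical.choose hs).2 else cR δ))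

/-- the reconstructed assignment -/
noncomputable def MM (v : V) : ZFSet.{b} := g S M (mT T v + 1) v

/-- the element attached to a region in the final reconstruction -/
noncomputable def fE (δ : Finset V) : ZFSet.{b} :=
  if hs : ∃ p, p ∈ S ∧ p.1 ∈ δ then MM S M T (Classical.choose hs).2 else cR δ

/-- level of a region -/
noncomputable def lvl (δ : Finset V) : ℕ :=
  if hs : ∃ p, p ∈ S ∧ p.1 ∈ δ then mT T (Classical.choose hs).2 + 1 else 0

variable {S M T}

theorem mem_g {y : ZFSet.{b}} {k : ℕ} {v : V} :
    y ∈ g S M (k + 1) v ↔ ∃ δ ∈ Dv M v,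
      (if hs : ∃ p, p ∈ S ∧ p.1 ∈ δ then g S M k (Classical.choose hs).2 else cR δ) = y := by
  show y ∈ ofl _ ↔ _
  rw [mem_ofl]
  simp only [List.mem_map, Finset.mem_toList]

theorem mT_lt {u v : V} (h1 : T u ⊆ T v) (h2 : T u ≠ T v) : mT T u < mT T v := by
  apply Finset.card_lt_card
  constructor
  · intro w hw
    simp only [Finset.mem_filter, Finset.mem_univ, true_and] at hw ⊢
    refine ⟨ZFSet.subset_def.2 fun z hz => ZFSet.subset_def.1 h1 (ZFSet.subset_def.1 hw.1 hz), ?_⟩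
    intro he
    rw [he] at hw
    exact h2 (zf_subset_antisymm h1 hw.1)
  · intro hsub
    have hu : u ∈ Finset.univ.filter (fun w => T w ⊆ T v ∧ T w ≠ T v) := by
      simp only [Finset.mem_filter, Finset.mem_univ, true_and]; exact ⟨h1, h2⟩
    have := hsub hu
    simp only [Finset.mem_filter, Finset.mem_univ, true_and] at this
    exact this.2 rfl

theorem block_ne (hXi : XiConditions S M T) {p : V × V} (hp : p ∈ S) : M p.1 ≠ ∅ := by
  intro h
  exact hXi.1 p hp (h ▸ ZFSet.empty_subset (M p.2))

theorem mem_block_subset (hXi : XiConditions S M T) {p : V × V} (hp : p ∈ S) {x : ZFSet.{a}}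
    {v : V} (hx : x ∈ M p.1) (hv : x ∈ M v) : M p.1 ⊆ M v := by
  apply hXi.2.2.1 p hp v
  intro h
  have : x ∈ M p.1 ∩ M v := ZFSet.mem_inter.2 ⟨hx, hv⟩
  rw [h] at this
  exact ZFSet.notMem_empty _ this

theorem mT_lt_of_mem (hXi : XiConditions S M T) {p : V × V} (hp : p ∈ S) {x : ZFSet.{a}}
    {v : V} (hx : x ∈ M p.1) (hv : x ∈ M v) : mT T p.2 < mT T v := by
  have hne : M p.1 ∩ M v ≠ ∅ := by
    intro h
    have : x ∈ M p.1 ∩ M v := ZFSet.mem_inter.2 ⟨hx, hv⟩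
    rw [h] at this
    exact ZFSet.notMem_empty _ this
  obtain ⟨h1, h2⟩ := hXi.2.2.2.1 p hp v hne
  exact mT_lt h1 h2

theorem region_special (hXi : XiConditions S M T) {p : V × V} (hp : p ∈ S) {x : ZFSet.{a}}
    (hx : x ∈ M p.1) (v : V) : x ∈ M v ↔ M p.1 ⊆ M v :=
  ⟨fun hv => mem_block_subset hXi hp hx hv, fun h => ZFSet.subset_def.1 h hx⟩

theorem Rel_witness {δ : Finset V} (hδ : δ ∈ Rel M) : ∃ x : ZFSet.{a}, Rgn M x = δ := by
  simpa [Rel] using hδ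

theorem special_lt (hXi : XiConditions S M T) {p : V × V} (hp : p ∈ S) {δ : Finset V} {v : V}
    (hpδ : p.1 ∈ δ) (hδ : δ ∈ Rel M) (hv : v ∈ δ) : mT T p.2 < mT T v := by
  obtain ⟨x, rfl⟩ := Rel_witness hδ
  exact mT_lt_of_mem hXi hp ((mem_Rgn M).1 hpδ) ((mem_Rgn M).1 hv)

theorem lvl_le (hXi : XiConditions S M T) {δ : Finset V} {v : V}
    (hδ : δ ∈ Rel M) (hv : v ∈ δ) : lvl S T δ ≤ mT T v := by
  rw [lvl]
  split
  · next hs =>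
    obtain ⟨hqS, hqδ⟩ := Classical.choose_spec hs
    exact special_lt hXi hqS hqδ hδ hv
  · exact Nat.zero_le _

theorem g_stab (hXi : XiConditions S M T) :
    ∀ k, ∀ v : V, mT T v < k → g S M (k + 1) v = g S M k v := by
  intro k
  induction k with
  | zero => intro v hv; omega
  | succ n ih =>
    intro v hv
    apply ZFSet.ext
    intro y
    rw [mem_g, mem_g]
    apply exists_congr
    intro δ
    apply and_congr_right
    intro hδ
    rw [mem_Dv] at hδ
    by_cases hs : ∃ p, p ∈ S ∧ p.1 ∈ δ
    · rw [dif_pos hs, dif_pos hs]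
      obtain ⟨hpS, hpδ⟩ := Classical.choose_spec hs
      have hlt := special_lt hXi hpS hpδ hδ.1 hδ.2
      rw [ih _ (by omega)]
    · rw [dif_neg hs, dif_neg hs]

theorem g_eq_MM (hXi : XiConditions S M T) :
    ∀ k, ∀ v : V, mT T v < k → g S M k v = MM S M T v := by
  intro k
  induction k with
  | zero => intro v hv; omega
  | succ n ih =>
    intro v hv
    rcases Nat.lt_succ_iff_lt_or_eq.1 hv with h | h
    · rw [g_stab hXi n v h, ih v h]
    · rw [MM, h]

theorem MM_mem (hXi : XiConditions S M T) {y : ZFSet.{b}} {v : V} :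
    y ∈ MM S M T v ↔ ∃ δ ∈ Dv M v, fE S M T δ = y := by
  rw [MM, mem_g]
  apply exists_congr
  intro δ
  apply and_congr_right
  intro hδ
  rw [mem_Dv] at hδ
  rw [fE]
  by_cases hs : ∃ p, p ∈ S ∧ p.1 ∈ δ
  · rw [dif_pos hs, dif_pos hs]
    obtain ⟨hpS, hpδ⟩ := Classical.choose_spec hs
    rw [g_eq_MM hXi _ _ (special_lt hXi hpS hpδ hδ.1 hδ.2)]
  · rw [dif_neg hs, dif_neg hs]

theorem Dv_wd {u v : V} (h : M u = M v) : Dv M u = Dv M v := by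
  apply Finset.ext
  intro δ
  rw [mem_Dv, mem_Dv]
  apply and_congr_right
  intro hδ
  obtain ⟨x, rfl⟩ := Rel_witness hδ
  rw [mem_Rgn, mem_Rgn, h]

theorem MM_wd (hXi : XiConditions S M T) {u v : V} (h : M u = M v) :
    MM S M T u = MM S M T v := by
  have hT : T u = T v := hXi.2.2.2.2 u v h
  have hmT : mT T u = mT T v := by simp only [mT, hT]
  rw [MM, MM, hmT]
  simp only [g, Dv_wd h]

theorem MM_ne_nz (hXi : XiConditions S M T) (u : V) {j : ℕ} (hj : KV V ≤ j) :
    MM S M T u ≠ nz.{b} j := by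
  intro heq
  have hmem : ∀ i : Fin j, ∃ w : V, MM S M T w = nz.{b} i := by
    intro i
    have h1 : nz.{b} i ∈ nz.{b} j := nz_mem i.2
    rw [← heq, MM_mem hXi] at h1
    obtain ⟨δ, hδ, hfδ⟩ := h1
    rw [fE] at hfδ
    split at hfδ
    · exact ⟨_, hfδ⟩
    · exact absurd hfδ (sing_ne_nz (cR_pos δ))
  choose φ hφ using hmem
  have hinj : Function.Injective φ := by
    intro i i' h
    have h2 : nz.{b} i = nz.{b} i' := by rw [← hφ i, ← hφ i', h]
    exact Fin.val_injective (nz_inj h2)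
  have hcard := Fintype.card_le_of_injective φ hinj
  rw [Fintype.card_fin] at hcard
  simp only [KV] at hj
  omega

theorem cR_ne_MM (hXi : XiConditions S M T) (δ : Finset V) (u : V) :
    (cR δ : ZFSet.{b}) ≠ MM S M T u := by
  intro h
  have hmem : nz.{b} (KV V + idxF δ) ∈ (cR δ : ZFSet.{b}) := ZFSet.mem_singleton.2 rfl
  rw [h, MM_mem hXi] at hmem
  obtain ⟨γ, hγ, hfγ⟩ := hmem
  rw [fE] at hfγ
  split at hfγ
  · exact MM_ne_nz hXi _ (Nat.le_add_right _ _) hfγ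
  · exact sing_ne_nz (cR_pos γ) hfγ


theorem key (hXi : XiConditions S M T) :
    ∀ δ δ' : Finset V, δ ∈ Rel M → δ' ∈ Rel M → fE S M T δ = fE S M T δ' → δ = δ' := by
  suffices Φ : ∀ n : ℕ, ∀ δ δ' : Finset V, δ ∈ Rel M → δ' ∈ Rel M →
      lvl S T δ ≤ n → lvl S T δ' ≤ n → fE S M T δ = fE S M T δ' → δ = δ' by
    intro δ δ' h1 h2 h3
    exact Φ (max (lvl S T δ) (lvl S T δ')) δ δ' h1 h2 (le_max_left _ _) (le_max_right _ _) h3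
  intro n
  induction n using Nat.strong_induction_on with
  | _ n ih =>
  intro δ δ' hδ hδ' hlδ hlδ' hf
  rw [fE, fE] at hf
  by_cases hs : ∃ p, p ∈ S ∧ p.1 ∈ δ
  · rw [dif_pos hs] at hf
    obtain ⟨hpS, hpδ⟩ := Classical.choose_spec hs
    by_cases hs' : ∃ q, q ∈ S ∧ q.1 ∈ δ'
    · rw [dif_pos hs'] at hf
      obtain ⟨hqS, hqδ⟩ := Classical.choose_spec hs'
      have hlv : mT T (Classical.choose hs).2 + 1 ≤ n := by
        rw [lvl, dif_pos hs] at hlδ; exact hlδ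
      have hlv' : mT T (Classical.choose hs').2 + 1 ≤ n := by
        rw [lvl, dif_pos hs'] at hlδ'; exact hlδ'
      have hn' : max (mT T (Classical.choose hs).2) (mT T (Classical.choose hs').2) < n := by
        omega
      have hM2 : M (Classical.choose hs).2 = M (Classical.choose hs').2 := by
        apply ZFSet.ext
        intro z
        constructor
        · intro hz
          have h1 : fE S M T (Rgn M z) ∈ MM S M T (Classical.choose hs').2 := by
            rw [← hf, MM_mem hXi]
            exact ⟨Rgn M z, (mem_Dv M).2 ⟨Rgn_mem_Rel M z, (mem_Rgn M).2 hz⟩, rfl⟩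
          rw [MM_mem hXi] at h1
          obtain ⟨γ, hγ, hfγ⟩ := h1
          rw [mem_Dv] at hγ
          have hgeq := ih _ hn' _ _ (Rgn_mem_Rel M z) hγ.1
            (le_trans (lvl_le hXi (Rgn_mem_Rel M z) ((mem_Rgn M).2 hz)) (le_max_left _ _))
            (le_trans (lvl_le hXi hγ.1 hγ.2) (le_max_right _ _)) hfγ.symm
          exact (mem_Rgn M).1 (hgeq ▸ hγ.2)
        · intro hz
          have h1 : fE S M T (Rgn M z) ∈ MM S M T (Classical.choose hs).2 := by
            rw [hf, MM_mem hXi]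
            exact ⟨Rgn M z, (mem_Dv M).2 ⟨Rgn_mem_Rel M z, (mem_Rgn M).2 hz⟩, rfl⟩
          rw [MM_mem hXi] at h1
          obtain ⟨γ, hγ, hfγ⟩ := h1
          rw [mem_Dv] at hγ
          have hgeq := ih _ hn' _ _ (Rgn_mem_Rel M z) hγ.1
            (le_trans (lvl_le hXi (Rgn_mem_Rel M z) ((mem_Rgn M).2 hz)) (le_max_right _ _))
            (le_trans (lvl_le hXi hγ.1 hγ.2) (le_max_left _ _)) hfγ.symm
          exact (mem_Rgn M).1 (hgeq ▸ hγ.2)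
      have hM1 : M (Classical.choose hs).1 = M (Classical.choose hs').1 :=
        (hXi.2.1 _ hpS _ hqS).1 hM2
      obtain ⟨x, rfl⟩ := Rel_witness hδ
      obtain ⟨x', rfl⟩ := Rel_witness hδ'
      apply Finset.ext
      intro v
      rw [mem_Rgn, mem_Rgn,
        region_special hXi hpS ((mem_Rgn M).1 hpδ) v,
        region_special hXi hqS ((mem_Rgn M).1 hqδ) v, hM1]
    · rw [dif_neg hs'] at hf
      exact absurd hf.symm (cR_ne_MM hXi δ' _)
  · rw [dif_neg hs] at hf
    by_cases hs' : ∃ q, q ∈ S ∧ q.1 ∈ δ'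
    · rw [dif_pos hs'] at hf
      exact absurd hf (cR_ne_MM hXi δ _)
    · rw [dif_neg hs', cR, cR] at hf
      exact idxF_inj (Nat.add_left_cancel (nz_inj (ZFSet.singleton_inj.1 hf)))

theorem fE_mem_iff (hXi : XiConditions S M T) {δ : Finset V} (hδ : δ ∈ Rel M) (v : V) :
    fE S M T δ ∈ MM S M T v ↔ v ∈ δ := by
  constructor
  · intro h
    rw [MM_mem hXi] at h
    obtain ⟨γ, hγ, hfγ⟩ := h
    rw [mem_Dv] at hγ
    rw [key hXi γ δ hγ.1 hδ hfγ] at hγ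
    exact hγ.2
  · intro h
    rw [MM_mem hXi]
    exact ⟨δ, (mem_Dv M).2 ⟨hδ, h⟩, rfl⟩

theorem sdiff_iff (hXi : XiConditions S M T) (v u w : V) :
    MM S M T v = MM S M T u \ MM S M T w ↔ M v = M u \ M w := by
  constructor
  · intro h
    apply ZFSet.ext
    intro x
    rw [ZFSet.mem_sdiff, ← mem_Rgn (M := M), ← mem_Rgn (M := M), ← mem_Rgn (M := M),
      ← fE_mem_iff hXi (Rgn_mem_Rel M x) v, ← fE_mem_iff hXi (Rgn_mem_Rel M x) u,
      ← fE_mem_iff hXi (Rgn_mem_Rel M x) w, h, ZFSet.mem_sdiff]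
  · intro h
    apply ZFSet.ext
    intro y
    rw [ZFSet.mem_sdiff]
    constructor
    · intro hy
      rw [MM_mem hXi] at hy
      obtain ⟨δ, hδ, rfl⟩ := hy
      rw [mem_Dv] at hδ
      obtain ⟨hδR, hvδ⟩ := hδ
      obtain ⟨x, rfl⟩ := Rel_witness hδR
      have hx : x ∈ M v := (mem_Rgn M).1 hvδ
      rw [h, ZFSet.mem_sdiff] at hx
      constructor
      · exact (fE_mem_iff hXi (Rgn_mem_Rel M x) u).2 ((mem_Rgn M).2 hx.1)
      · intro hmem
        exact hx.2 ((mem_Rgn M).1 ((fE_mem_iff hXi (Rgn_mem_Rel M x) w).1 hmem))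
    · rintro ⟨hyu, hyw⟩
      rw [MM_mem hXi] at hyu
      obtain ⟨δ, hδ, rfl⟩ := hyu
      rw [mem_Dv] at hδ
      obtain ⟨hδR, huδ⟩ := hδ
      obtain ⟨x, rfl⟩ := Rel_witness hδR
      have hxw : x ∉ M w := fun hxw =>
        hyw ((fE_mem_iff hXi (Rgn_mem_Rel M x) w).2 ((mem_Rgn M).2 hxw))
      have hxv : x ∈ M v := by
        rw [h, ZFSet.mem_sdiff]; exact ⟨(mem_Rgn M).1 huδ, hxw⟩
      exact (fE_mem_iff hXi (Rgn_mem_Rel M x) v).2 ((mem_Rgn M).2 hxv)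

theorem fE_special (hXi : XiConditions S M T) {p : V × V} (hp : p ∈ S) {δ : Finset V}
    (hδ : δ ∈ Rel M) (hpδ : p.1 ∈ δ) : fE S M T δ = MM S M T p.2 := by
  have hs : ∃ q, q ∈ S ∧ q.1 ∈ δ := ⟨p, hp, hpδ⟩
  rw [fE, dif_pos hs]
  obtain ⟨hqS, hqδ⟩ := Classical.choose_spec hs
  obtain ⟨x, rfl⟩ := Rel_witness hδ
  have h1 : M (Classical.choose hs).1 = M p.1 :=
    zf_subset_antisymm
      (mem_block_subset hXi hqS ((mem_Rgn M).1 hqδ) ((mem_Rgn M).1 hpδ))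
      (mem_block_subset hXi hp ((mem_Rgn M).1 hpδ) ((mem_Rgn M).1 hqδ))
  exact MM_wd hXi ((hXi.2.1 _ hqS _ hp).2 h1)

theorem MM_singleton (hXi : XiConditions S M T) {p : V × V} (hp : p ∈ S) :
    MM S M T p.1 = {MM S M T p.2} := by
  obtain ⟨x, hx⟩ := (ZFSet.nonempty_def _).1
    ((ZFSet.eq_empty_or_nonempty (M p.1)).resolve_left (block_ne hXi hp))
  apply ZFSet.ext
  intro y
  rw [ZFSet.mem_singleton, MM_mem hXi]
  constructor
  · rintro ⟨δ, hδ, rfl⟩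
    rw [mem_Dv] at hδ
    exact fE_special hXi hp hδ.1 hδ.2
  · rintro rfl
    exact ⟨Rgn M x, (mem_Dv M).2 ⟨Rgn_mem_Rel M x, (mem_Rgn M).2 hx⟩,
      fE_special hXi hp (Rgn_mem_Rel M x) ((mem_Rgn M).2 hx)⟩


theorem xi_of_system {M : V → ZFSet.{a}} (hSing : ∀ p ∈ S, M p.1 = {M p.2}) :
    XiConditions S M (fun v => nz.{c} (rkc M v)) := by
  refine ⟨?_, ?_, ?_, ?_, ?_⟩
  · intro p hp hsub
    have h1 : M p.2 ∈ M p.1 := by rw [hSing p hp]; exact ZFSet.mem_singleton.2 rfl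
    exact ZFSet.mem_irrefl _ (ZFSet.subset_def.1 hsub h1)
  · intro p hp q hq
    rw [hSing p hp, hSing q hq]
    exact ZFSet.singleton_inj.symm
  · intro p hp v hne
    obtain ⟨y, hy⟩ := (ZFSet.nonempty_def _).1 ((ZFSet.eq_empty_or_nonempty _).resolve_left hne)
    rw [ZFSet.mem_inter] at hy
    have hy1 : y = M p.2 := by rw [hSing p hp] at hy; exact ZFSet.mem_singleton.1 hy.1
    rw [hSing p hp]
    exact ZFSet.subset_def.2 fun z hz => by
      rw [ZFSet.mem_singleton.1 hz, ← hy1]; exact hy.2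
  · intro p hp v hne
    obtain ⟨y, hy⟩ := (ZFSet.nonempty_def _).1 ((ZFSet.eq_empty_or_nonempty _).resolve_left hne)
    rw [ZFSet.mem_inter] at hy
    have hy1 : y = M p.2 := by rw [hSing p hp] at hy; exact ZFSet.mem_singleton.1 hy.1
    have hmem : M p.2 ∈ M v := hy1 ▸ hy.2
    have hlt := rkc_lt (ZFSet.rank_lt_of_mem hmem)
    exact ⟨nz_subset (le_of_lt hlt), fun h => (Nat.ne_of_lt hlt) (nz_inj h)⟩
  · intro u v h
    have h2 : rkc M u = rkc M v := by unfold rkc; rw [h]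
    simp only [h2]


end Main

end SingletonExpr

theorem system_sat_iff_xi_sat {V : Type*} [Fintype V]
    (P N : Finset (V × V × V)) (S : Finset (V × V)) :
    (∃ M : V → ZFSet, ModelsSystem P N S M) ↔
      (∃ M T : V → ZFSet, ModelsLits P N M ∧ XiConditions S M T) := by
  classical
  constructor
  · rintro ⟨M, hLits, hSing⟩
    have hXi := SingletonExpr.xi_of_system.{_, 0} (S := S) hSing
    refine ⟨SingletonExpr.MM S M (fun v => SingletonExpr.nz.{0} (SingletonExpr.rkc M v)),
      fun v => SingletonExpr.nz (SingletonExpr.rkc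
        (SingletonExpr.MM S M (fun v => SingletonExpr.nz.{0} (SingletonExpr.rkc M v))) v),
      ⟨?_, ?_⟩, ?_⟩
    · intro t ht
      exact (SingletonExpr.sdiff_iff hXi t.1 t.2.1 t.2.2).2 (hLits.1 t ht)
    · intro t ht h
      exact hLits.2 t ht ((SingletonExpr.sdiff_iff hXi t.1 t.2.1 t.2.2).1 h)
    · exact SingletonExpr.xi_of_system (S := S)
        (fun p hp => SingletonExpr.MM_singleton hXi hp)
  · rintro ⟨M, T, hL, hXi⟩
    refine ⟨SingletonExpr.MM S M T, ⟨?_, ?_⟩, ?_⟩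
    · intro t ht
      exact (SingletonExpr.sdiff_iff hXi t.1 t.2.1 t.2.2).2 (hL.1 t ht)
    · intro t ht h
      exact hL.2 t ht ((SingletonExpr.sdiff_iff hXi t.1 t.2.1 t.2.2).1 h)
    · intro p hp
      exact SingletonExpr.MM_singleton hXi hp
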